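/- arXiv:2011.14801 — 8 statements merged into one kernel-verified Lean document; each statement's English description precedes it below -/
import Mathlib

section
/- Let G be a finite simple graph, 𝒱 = (𝒱_1,…,𝒱_p) a partition of V(G), k ≥ 1, and U ⊆ V(G) such that G − U is a cluster graph with connected components C_1,…,C_r; write comp(v) = j if v ∈ V(G)∖U lies in C_j. Let X ⊆ U contain at most one vertex of each part of 𝒱, and let φ' be a proper k-coloring of the subgraph of G induced by X. Let S ⊆ [p] be the set of indices of parts not hit by X. If there exists a selective set V* ⊆ V(G) with V* ∩ U = X such that the subgraph of G induced by V* admits a proper k-coloring extending φ', then there exist functions s : S → V(G)∖U and c : S → [k] such that: (i) s(ℓ) ∈ 𝒱_ℓ for every ℓ ∈ S; (ii) for every ℓ ∈ S, no neighbor of s(ℓ) in X receives color c(ℓ) under φ'; and (iii) the map ℓ ↦ (c(ℓ), comp(s(ℓ))) is injective on S. -/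
/-- Let `G` be a finite simple graph, `𝒱 = (𝒱_1, …, 𝒱_p)` a partition of
`V(G)`, `k ≥ 1`, and `U ⊆ V(G)` such that `G - U` is a cluster graph whose connected
components are labelled by `comp : V → Fin r` (so, for `v, w ∉ U`, `comp v = comp w` iff
`v = w` or `v` and `w` are adjacent).  Let `X ⊆ U` contain at most one vertex of each part
of `𝒱`, let `φ'` be a proper `k`-coloring of the subgraph induced by `X`, and let `S` be
the set of indices of parts not hit by `X`.  If there exists a selective set `V*` with
`V* ∩ U = X` whose induced subgraph admits a proper `k`-coloring extending `φ'`, then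
there are functions `s : S → V(G) ∖ U` and `c : S → [k]` such that (i) `s ℓ ∈ 𝒱_ℓ` for
every `ℓ ∈ S`, (ii) no neighbor of `s ℓ` in `X` receives color `c ℓ` under `φ'`, and
(iii) `ℓ ↦ (c ℓ, comp (s ℓ))` is injective on `S`. -/
theorem selective_coloring_cluster_necessity
    {V : Type*} [Fintype V] [DecidableEq V] (G : SimpleGraph V)
    (p : ℕ) (𝒱 : Fin p → Finset V)
    (hdisj : ∀ ℓ ℓ' : Fin p, ℓ ≠ ℓ' → Disjoint (𝒱 ℓ) (𝒱 ℓ'))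
    (hcover : ∀ v : V, ∃ ℓ, v ∈ 𝒱 ℓ)
    (k : ℕ) (hk : 1 ≤ k)
    (U : Finset V) (r : ℕ) (comp : V → Fin r)
    (hcluster : ∀ v w : V, v ∉ U → w ∉ U →
      (comp v = comp w ↔ (v = w ∨ G.Adj v w)))
    (X : Finset V) (hXU : X ⊆ U)
    (hXone : ∀ ℓ : Fin p, (X ∩ 𝒱 ℓ).card ≤ 1)
    (φ' : V → Fin k)
    (hφ' : ∀ a ∈ X, ∀ b ∈ X, G.Adj a b → φ' a ≠ φ' b)
    (S : Finset (Fin p)) (hS : ∀ ℓ : Fin p, ℓ ∈ S ↔ X ∩ 𝒱 ℓ = ∅)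
    (Vstar : Finset V) (hVstarU : Vstar ∩ U = X)
    (hselective : ∀ ℓ : Fin p, (Vstar ∩ 𝒱 ℓ).card = 1)
    (hcol : ∃ ψ : V → Fin k, (∀ x ∈ X, ψ x = φ' x) ∧
      ∀ a ∈ Vstar, ∀ b ∈ Vstar, G.Adj a b → ψ a ≠ ψ b) :
    ∃ (s : Fin p → V) (c : Fin p → Fin k),
      (∀ ℓ ∈ S, s ℓ ∉ U ∧ s ℓ ∈ 𝒱 ℓ) ∧
      (∀ ℓ ∈ S, ∀ w ∈ X, G.Adj (s ℓ) w → φ' w ≠ c ℓ) ∧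
      (∀ ℓ ∈ S, ∀ ℓ' ∈ S, (c ℓ, comp (s ℓ)) = (c ℓ', comp (s ℓ')) → ℓ = ℓ') := by

  obtain ⟨ψ, hψX, hψcol⟩ := hcol
  have hpick : ∀ ℓ : Fin p, ∃ v, v ∈ Vstar ∩ 𝒱 ℓ := by
    intro ℓ
    have := hselective ℓ
    rcases Finset.card_eq_one.mp this with ⟨v, hv⟩
    exact ⟨v, by simp [hv]⟩
  choose s hs using hpick
  have hsV : ∀ ℓ, s ℓ ∈ Vstar := fun ℓ => (Finset.mem_inter.mp (hs ℓ)).1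
  have hs𝒱 : ∀ ℓ, s ℓ ∈ 𝒱 ℓ := fun ℓ => (Finset.mem_inter.mp (hs ℓ)).2
  have hsU : ∀ ℓ ∈ S, s ℓ ∉ U := by
    intro ℓ hℓ hmem
    have hx : s ℓ ∈ X := hVstarU ▸ Finset.mem_inter.mpr ⟨hsV ℓ, hmem⟩
    have : s ℓ ∈ X ∩ 𝒱 ℓ := Finset.mem_inter.mpr ⟨hx, hs𝒱 ℓ⟩
    rw [(hS ℓ).mp hℓ] at this
    exact absurd this (Finset.notMem_empty _)
  refine ⟨s, fun ℓ => ψ (s ℓ), fun ℓ hℓ => ⟨hsU ℓ hℓ, hs𝒱 ℓ⟩, ?_, ?_⟩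
  · intro ℓ hℓ w hw hadj
    have hwV : w ∈ Vstar := by
      have : w ∈ Vstar ∩ U := hVstarU ▸ hw
      exact (Finset.mem_inter.mp this).1
    have := hψcol w hwV (s ℓ) (hsV ℓ) hadj.symm
    rw [hψX w hw] at this
    exact this
  · intro ℓ hℓ ℓ' hℓ' heq
    have hc : ψ (s ℓ) = ψ (s ℓ') := (Prod.mk.injEq _ _ _ _ ▸ heq).1
    have hcomp : comp (s ℓ) = comp (s ℓ') := (Prod.mk.injEq _ _ _ _ ▸ heq).2
    have hss : s ℓ = s ℓ' := by
      rcases (hcluster _ _ (hsU ℓ hℓ) (hsU ℓ' hℓ')).mp hcomp with h | h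
      · exact h
      · exact absurd hc (hψcol _ (hsV ℓ) _ (hsV ℓ') h)
    by_contra hne
    exact Finset.disjoint_left.mp (hdisj ℓ ℓ' hne) (hs𝒱 ℓ) (hss ▸ hs𝒱 ℓ')
end

section
/- Let G be a finite simple graph, 𝒱 = (𝒱_1,…,𝒱_p) a partition of V(G), k ≥ 1, and U ⊆ V(G) such that G − U is a cluster graph with connected components C_1,…,C_r; write comp(v) = j if v ∈ V(G)∖U lies in C_j. Let X ⊆ U contain at most one vertex of each part of 𝒱, and let φ' be a proper k-coloring of the subgraph of G induced by X. Let S ⊆ [p] be the set of indices of parts not hit by X. Suppose there exist functions s : S → V(G)∖U and c : S → [k] such that: (i) s(ℓ) ∈ 𝒱_ℓ for every ℓ ∈ S; (ii) for every ℓ ∈ S, no neighbor of s(ℓ) in X receives color c(ℓ) under φ'; and (iii) the map ℓ ↦ (c(ℓ), comp(s(ℓ))) is injective on S. Then the set V* = X ∪ {s(ℓ) : ℓ ∈ S} is selective, and the function equal to φ' on X and to c(ℓ) on s(ℓ) is a proper k-coloring of the subgraph of G induced by V*. -/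
/-- Let `G` be a finite simple graph, `𝒱 = (𝒱_1, …, 𝒱_p)` a partition of
`V(G)`, `k ≥ 1`, and `U ⊆ V(G)` such that `G - U` is a cluster graph whose connected
components are labelled by `comp : V → Fin r` (so, for `v, w ∉ U`, `comp v = comp w` iff
`v = w` or `v` and `w` are adjacent).  Let `X ⊆ U` contain at most one vertex of each part
of `𝒱`, let `φ'` be a proper `k`-coloring of the subgraph induced by `X`, and let `S` be
the set of indices of parts not hit by `X`.  Suppose there are functions
`s : S → V(G) ∖ U` and `c : S → [k]` such that (i) `s ℓ ∈ 𝒱_ℓ` for every `ℓ ∈ S`,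
(ii) no neighbor of `s ℓ` in `X` receives color `c ℓ` under `φ'`, and (iii)
`ℓ ↦ (c ℓ, comp (s ℓ))` is injective on `S`.  Then `V* = X ∪ {s ℓ : ℓ ∈ S}` is
selective, and the function equal to `φ'` on `X` and to `c ℓ` on `s ℓ` is a proper
`k`-coloring of the subgraph of `G` induced by `V*`. -/
theorem selective_coloring_cluster_sufficiency
    {V : Type*} [Fintype V] [DecidableEq V] (G : SimpleGraph V)
    (p : ℕ) (𝒱 : Fin p → Finset V)
    (hdisj : ∀ ℓ ℓ' : Fin p, ℓ ≠ ℓ' → Disjoint (𝒱 ℓ) (𝒱 ℓ'))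
    (hcover : ∀ v : V, ∃ ℓ, v ∈ 𝒱 ℓ)
    (k : ℕ) (hk : 1 ≤ k)
    (U : Finset V) (r : ℕ) (comp : V → Fin r)
    (hcluster : ∀ v w : V, v ∉ U → w ∉ U →
      (comp v = comp w ↔ (v = w ∨ G.Adj v w)))
    (X : Finset V) (hXU : X ⊆ U)
    (hXone : ∀ ℓ : Fin p, (X ∩ 𝒱 ℓ).card ≤ 1)
    (φ' : V → Fin k)
    (hφ' : ∀ a ∈ X, ∀ b ∈ X, G.Adj a b → φ' a ≠ φ' b)
    (S : Finset (Fin p)) (hS : ∀ ℓ : Fin p, ℓ ∈ S ↔ X ∩ 𝒱 ℓ = ∅)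
    (s : Fin p → V) (c : Fin p → Fin k)
    (hs : ∀ ℓ ∈ S, s ℓ ∉ U ∧ s ℓ ∈ 𝒱 ℓ)
    (hc : ∀ ℓ ∈ S, ∀ w ∈ X, G.Adj (s ℓ) w → φ' w ≠ c ℓ)
    (hinj : ∀ ℓ ∈ S, ∀ ℓ' ∈ S, (c ℓ, comp (s ℓ)) = (c ℓ', comp (s ℓ')) → ℓ = ℓ') :
    (∀ ℓ : Fin p, ((X ∪ S.image s) ∩ 𝒱 ℓ).card = 1) ∧
    ∃ ψ : V → Fin k,
      (∀ x ∈ X, ψ x = φ' x) ∧ (∀ ℓ ∈ S, ψ (s ℓ) = c ℓ) ∧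
      (∀ a ∈ X ∪ S.image s, ∀ b ∈ X ∪ S.image s, G.Adj a b → ψ a ≠ ψ b) := by
    classical
  have sinj : ∀ ℓ ∈ S, ∀ ℓ' ∈ S, s ℓ = s ℓ' → ℓ = ℓ' := by
    intro ℓ hℓ ℓ' hℓ' h
    by_contra hne
    exact Finset.disjoint_left.mp (hdisj ℓ ℓ' hne) (hs ℓ hℓ).2 (h ▸ (hs ℓ' hℓ').2)
  set ψ : V → Fin k := fun v =>
    if h : ∃ ℓ, ℓ ∈ S ∧ s ℓ = v then c h.choose else φ' v with hψ
  have ψs : ∀ ℓ ∈ S, ψ (s ℓ) = c ℓ := by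
    intro ℓ hℓ
    have h : ∃ ℓ', ℓ' ∈ S ∧ s ℓ' = s ℓ := ⟨ℓ, hℓ, rfl⟩
    simp only [hψ, dif_pos h]
    exact congrArg c (sinj _ h.choose_spec.1 _ hℓ h.choose_spec.2)
  have ψX : ∀ x ∈ X, ψ x = φ' x := by
    intro x hx
    have h : ¬ ∃ ℓ, ℓ ∈ S ∧ s ℓ = x := by
      rintro ⟨ℓ, hℓ, rfl⟩
      exact (hs ℓ hℓ).1 (hXU hx)
    simp only [hψ, dif_neg h]
  constructor
  · intro ℓ
    rw [Finset.union_inter_distrib_right]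
    by_cases hℓ : ℓ ∈ S
    · have h1 : X ∩ 𝒱 ℓ = ∅ := (hS ℓ).1 hℓ
      have h2 : S.image s ∩ 𝒱 ℓ = {s ℓ} := by
        apply Finset.ext
        intro v
        simp only [Finset.mem_inter, Finset.mem_image, Finset.mem_singleton]
        constructor
        · rintro ⟨⟨ℓ', hℓ', rfl⟩, hv⟩
          by_cases he : ℓ' = ℓ
          · subst he; rfl
          · exact absurd hv (Finset.disjoint_left.mp (hdisj ℓ' ℓ he) (hs ℓ' hℓ').2)
        · rintro rfl
          exact ⟨⟨ℓ, hℓ, rfl⟩, (hs ℓ hℓ).2⟩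
      rw [h1, h2, Finset.empty_union, Finset.card_singleton]
    · have h2 : S.image s ∩ 𝒱 ℓ = ∅ := by
        apply Finset.eq_empty_of_forall_notMem
        intro v hv
        rw [Finset.mem_inter, Finset.mem_image] at hv
        obtain ⟨⟨ℓ', hℓ', rfl⟩, hv⟩ := hv
        have he : ℓ' ≠ ℓ := fun h => hℓ (h ▸ hℓ')
        exact Finset.disjoint_left.mp (hdisj ℓ' ℓ he) (hs ℓ' hℓ').2 hv
      rw [h2, Finset.union_empty]
      have hne : X ∩ 𝒱 ℓ ≠ ∅ := fun h => hℓ ((hS ℓ).2 h)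
      have := hXone ℓ
      have hpos : 0 < (X ∩ 𝒱 ℓ).card := Finset.card_pos.mpr
        (Finset.nonempty_iff_ne_empty.mpr hne)
      omega
  · refine ⟨ψ, ψX, ψs, ?_⟩
    intro a ha b hb hab
    rcases Finset.mem_union.mp ha with haX | has <;>
      rcases Finset.mem_union.mp hb with hbX | hbs
    · rw [ψX a haX, ψX b hbX]; exact hφ' a haX b hbX hab
    · obtain ⟨ℓ, hℓ, rfl⟩ := Finset.mem_image.mp hbs
      rw [ψX a haX, ψs ℓ hℓ]
      exact hc ℓ hℓ a haX hab.symm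
    · obtain ⟨ℓ, hℓ, rfl⟩ := Finset.mem_image.mp has
      rw [ψX b hbX, ψs ℓ hℓ]
      exact fun h => hc ℓ hℓ b hbX hab h.symm
    · obtain ⟨ℓ, hℓ, rfl⟩ := Finset.mem_image.mp has
      obtain ⟨ℓ', hℓ', rfl⟩ := Finset.mem_image.mp hbs
      rw [ψs ℓ hℓ, ψs ℓ' hℓ']
      intro hcc
      have hcomp : comp (s ℓ) = comp (s ℓ') :=
        (hcluster _ _ (hs ℓ hℓ).1 (hs ℓ' hℓ').1).2 (Or.inr hab)
      have : ℓ = ℓ' := hinj ℓ hℓ ℓ' hℓ' (by rw [Prod.mk.injEq]; exact ⟨hcc, hcomp⟩)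
      subst this
      exact G.irrefl hab
end

section
/- Let G be a finite simple graph, 𝒱 = (𝒱_1,…,𝒱_p) a partition of V(G), k ≥ 1, and U ⊆ V(G) such that G − U is a cluster graph with connected components C_1,…,C_r; write comp(v) = j if v ∈ V(G)∖U lies in C_j. Then the following are equivalent: (a) there exists a selective set V* ⊆ V(G) such that the subgraph of G induced by V* is properly k-colorable; (b) there exist a set X ⊆ U containing at most one vertex of each part of 𝒱, a proper k-coloring φ' of the subgraph of G induced by X, and functions s : S → V(G)∖U and c : S → [k], where S ⊆ [p] is the set of indices of parts not hit by X, such that: (i) s(ℓ) ∈ 𝒱_ℓ for every ℓ ∈ S; (ii) for every ℓ ∈ S, no neighbor of s(ℓ) in X receives color c(ℓ) under φ'; and (iii) the map ℓ ↦ (c(ℓ), comp(s(ℓ))) is injective on S. -/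
/-- Let `G` be a finite simple graph, `𝒱 = (𝒱_1, …, 𝒱_p)` a partition of
`V(G)`, `k ≥ 1`, and `U ⊆ V(G)` such that `G - U` is a cluster graph whose connected
components are labelled by `comp : V → Fin r` (so, for `v, w ∉ U`, `comp v = comp w` iff
`v = w` or `v` and `w` are adjacent).  Then there exists a selective set `V* ⊆ V(G)`
whose induced subgraph is properly `k`-colorable if and only if there exist a set
`X ⊆ U` containing at most one vertex of each part of `𝒱`, a proper `k`-coloring `φ'` of
the subgraph induced by `X`, and functions `s : S → V(G) ∖ U` and `c : S → [k]`, where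
`S` is the set of indices of parts not hit by `X`, such that (i) `s ℓ ∈ 𝒱_ℓ` for every
`ℓ ∈ S`, (ii) no neighbor of `s ℓ` in `X` receives color `c ℓ` under `φ'`, and (iii)
`ℓ ↦ (c ℓ, comp (s ℓ))` is injective on `S`. -/
theorem selective_coloring_cluster_characterization
    {V : Type*} [Fintype V] [DecidableEq V] (G : SimpleGraph V)
    (p : ℕ) (𝒱 : Fin p → Finset V)
    (hdisj : ∀ ℓ ℓ' : Fin p, ℓ ≠ ℓ' → Disjoint (𝒱 ℓ) (𝒱 ℓ'))
    (hcover : ∀ v : V, ∃ ℓ, v ∈ 𝒱 ℓ)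
    (k : ℕ) (hk : 1 ≤ k)
    (U : Finset V) (r : ℕ) (comp : V → Fin r)
    (hcluster : ∀ v w : V, v ∉ U → w ∉ U →
      (comp v = comp w ↔ (v = w ∨ G.Adj v w))) :
    (∃ Vstar : Finset V, (∀ ℓ : Fin p, (Vstar ∩ 𝒱 ℓ).card = 1) ∧
      ∃ ψ : V → Fin k, ∀ a ∈ Vstar, ∀ b ∈ Vstar, G.Adj a b → ψ a ≠ ψ b) ↔
    (∃ X : Finset V, X ⊆ U ∧ (∀ ℓ : Fin p, (X ∩ 𝒱 ℓ).card ≤ 1) ∧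
      ∃ φ' : V → Fin k, (∀ a ∈ X, ∀ b ∈ X, G.Adj a b → φ' a ≠ φ' b) ∧
      ∃ (s : Fin p → V) (c : Fin p → Fin k),
        (∀ ℓ : Fin p, X ∩ 𝒱 ℓ = ∅ → s ℓ ∉ U ∧ s ℓ ∈ 𝒱 ℓ) ∧
        (∀ ℓ : Fin p, X ∩ 𝒱 ℓ = ∅ → ∀ w ∈ X, G.Adj (s ℓ) w → φ' w ≠ c ℓ) ∧
        (∀ ℓ ℓ' : Fin p, X ∩ 𝒱 ℓ = ∅ → X ∩ 𝒱 ℓ' = ∅ →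
          (c ℓ, comp (s ℓ)) = (c ℓ', comp (s ℓ')) → ℓ = ℓ')) := by
  classical
  constructor
  · rintro ⟨Vstar, h1, ψ, hψ⟩
    have hex : ∀ ℓ, ∃ a, Vstar ∩ 𝒱 ℓ = {a} := fun ℓ => Finset.card_eq_one.mp (h1 ℓ)
    choose t ht using hex
    have htmem : ∀ ℓ, t ℓ ∈ Vstar ∧ t ℓ ∈ 𝒱 ℓ := by
      intro ℓ
      have h : t ℓ ∈ Vstar ∩ 𝒱 ℓ := (ht ℓ) ▸ Finset.mem_singleton_self _
      exact Finset.mem_inter.mp h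
    have htnU : ∀ ℓ, (Vstar ∩ U) ∩ 𝒱 ℓ = ∅ → t ℓ ∉ U := by
      intro ℓ hℓ hU
      have h : t ℓ ∈ (Vstar ∩ U) ∩ 𝒱 ℓ :=
        Finset.mem_inter.mpr ⟨Finset.mem_inter.mpr ⟨(htmem ℓ).1, hU⟩, (htmem ℓ).2⟩
      rw [hℓ] at h
      exact Finset.notMem_empty _ h
    refine ⟨Vstar ∩ U, Finset.inter_subset_right, ?_, ψ, ?_, t, fun ℓ => ψ (t ℓ), ?_, ?_, ?_⟩
    · intro ℓ
      have hsub : (Vstar ∩ U) ∩ 𝒱 ℓ ⊆ Vstar ∩ 𝒱 ℓ := by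
        intro x hx
        simp only [Finset.mem_inter] at hx ⊢
        exact ⟨hx.1.1, hx.2⟩
      calc ((Vstar ∩ U) ∩ 𝒱 ℓ).card ≤ (Vstar ∩ 𝒱 ℓ).card := Finset.card_le_card hsub
        _ = 1 := h1 ℓ
    · intro a ha b hb
      exact hψ a (Finset.mem_inter.mp ha).1 b (Finset.mem_inter.mp hb).1
    · intro ℓ hℓ
      exact ⟨htnU ℓ hℓ, (htmem ℓ).2⟩
    · intro ℓ hℓ w hw hadj
      exact hψ w (Finset.mem_inter.mp hw).1 (t ℓ) (htmem ℓ).1 hadj.symm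
    · intro ℓ ℓ' hℓ hℓ' hpair
      rw [Prod.ext_iff] at hpair
      obtain ⟨hc, hcomp⟩ := hpair
      rcases (hcluster (t ℓ) (t ℓ') (htnU ℓ hℓ) (htnU ℓ' hℓ')).mp hcomp with heq | hadj
      · by_contra hne
        exact Finset.disjoint_left.mp (hdisj ℓ ℓ' hne) (htmem ℓ).2 (heq ▸ (htmem ℓ').2)
      · exact absurd hc (hψ (t ℓ) (htmem ℓ).1 (t ℓ') (htmem ℓ').1 hadj)
  · rintro ⟨X, hXU, hX1, φ', hφ, s, c, hs, hc2, hinj⟩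
    have hsinj : ∀ ℓ ℓ', X ∩ 𝒱 ℓ = ∅ → X ∩ 𝒱 ℓ' = ∅ → s ℓ = s ℓ' → ℓ = ℓ' := by
      intro ℓ ℓ' h h' heq
      by_contra hne
      exact Finset.disjoint_left.mp (hdisj ℓ ℓ' hne) (hs ℓ h).2 (heq ▸ (hs ℓ' h').2)
    have hmemV : ∀ ℓ ℓ', X ∩ 𝒱 ℓ' = ∅ → s ℓ' ∈ 𝒱 ℓ → ℓ' = ℓ := by
      intro ℓ ℓ' h hmem
      by_contra hne
      exact Finset.disjoint_left.mp (hdisj ℓ' ℓ hne) (hs ℓ' h).2 hmem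
    set S : Finset (Fin p) := Finset.univ.filter (fun ℓ => X ∩ 𝒱 ℓ = ∅) with hSdef
    set Vstar := X ∪ S.image s with hVdef
    set ψ : V → Fin k :=
      fun v => if h : ∃ ℓ, X ∩ 𝒱 ℓ = ∅ ∧ s ℓ = v then c h.choose else φ' v with hψdef
    have hψs : ∀ ℓ, X ∩ 𝒱 ℓ = ∅ → ψ (s ℓ) = c ℓ := by
      intro ℓ h
      have hex : ∃ ℓ', X ∩ 𝒱 ℓ' = ∅ ∧ s ℓ' = s ℓ := ⟨ℓ, h, rfl⟩
      have hspec := hex.choose_spec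
      simp only [hψdef, dif_pos hex]
      rw [hsinj _ _ hspec.1 h hspec.2]
    have hψX : ∀ v ∈ X, ψ v = φ' v := by
      intro v hv
      have hno : ¬ ∃ ℓ, X ∩ 𝒱 ℓ = ∅ ∧ s ℓ = v := by
        rintro ⟨ℓ, h, rfl⟩
        exact (hs ℓ h).1 (hXU hv)
      simp only [hψdef, dif_neg hno]
    have hmemVstar : ∀ v, v ∈ Vstar ↔ v ∈ X ∨ ∃ ℓ, X ∩ 𝒱 ℓ = ∅ ∧ s ℓ = v := by
      intro v
      simp [hVdef, hSdef]
    refine ⟨Vstar, ?_, ψ, ?_⟩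
    · intro ℓ
      by_cases hS : X ∩ 𝒱 ℓ = ∅
      · have heq : Vstar ∩ 𝒱 ℓ = {s ℓ} := by
          ext v
          simp only [Finset.mem_inter, Finset.mem_singleton, hmemVstar]
          constructor
          · rintro ⟨hv1 | ⟨ℓ', hℓ', rfl⟩, hv2⟩
            · exact absurd (Finset.mem_inter.mpr ⟨hv1, hv2⟩)
                (hS ▸ Finset.notMem_empty v)
            · exact congrArg s (hmemV ℓ ℓ' hℓ' hv2)
          · rintro rfl
            exact ⟨Or.inr ⟨ℓ, hS, rfl⟩, (hs ℓ hS).2⟩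
        rw [heq, Finset.card_singleton]
      · have heq : Vstar ∩ 𝒱 ℓ = X ∩ 𝒱 ℓ := by
          ext v
          simp only [Finset.mem_inter, hmemVstar]
          constructor
          · rintro ⟨hv1 | ⟨ℓ', hℓ', rfl⟩, hv2⟩
            · exact ⟨hv1, hv2⟩
            · exact absurd (hmemV ℓ ℓ' hℓ' hv2 ▸ hℓ') hS
          · rintro ⟨hv1, hv2⟩
            exact ⟨Or.inl hv1, hv2⟩
        rw [heq]
        exact le_antisymm (hX1 ℓ)
          (Finset.card_pos.mpr (Finset.nonempty_iff_ne_empty.mpr hS))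
    · intro a ha b hb hadj
      rw [hmemVstar] at ha hb
      rcases ha with ha | ⟨ℓ, hℓ, rfl⟩
      · rcases hb with hb | ⟨ℓ', hℓ', rfl⟩
        · rw [hψX a ha, hψX b hb]
          exact hφ a ha b hb hadj
        · rw [hψX a ha, hψs ℓ' hℓ']
          exact hc2 ℓ' hℓ' a ha hadj.symm
      · rcases hb with hb | ⟨ℓ', hℓ', rfl⟩
        · rw [hψs ℓ hℓ, hψX b hb]
          exact (hc2 ℓ hℓ b hb hadj).symm
        · rw [hψs ℓ hℓ, hψs ℓ' hℓ']
          intro hcc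
          have hcomp : comp (s ℓ) = comp (s ℓ') :=
            (hcluster (s ℓ) (s ℓ') (hs ℓ hℓ).1 (hs ℓ' hℓ').1).mpr (Or.inr hadj)
          have : ℓ = ℓ' := hinj ℓ ℓ' hℓ hℓ' (Prod.ext hcc hcomp)
          subst this
          exact G.irrefl hadj
end

section
/- Let G and 𝒱 be the graph and partition produced by the composition construction (described in the context) from graphs H_1,…,H_t on vertex set [n] and an integer k ≥ 1. Let G* be an induced subgraph of G whose vertex set contains some y_j ∈ Y and all of Q(G), and let ψ be a proper k-coloring of G*. Then for every vertex u of G* with u ≠ y_j: ψ(u) = ψ(y_j) if and only if u ∉ Q(G). -/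
open Classical
noncomputable section

/-! ## The composition construction

Vertices of the composed graph `G` built from graphs `H 0, …, H (t-1)` on vertex set
`Fin n` and an integer `k ≥ 1`:

* `mkA n t k v u h i` is the gadget vertex `v_i(u)` of `G_v` (for `u ≠ v`), where
  `i : Fin 4` with `i ∈ {0, 1, 2}` encoding colors `1, 2, 3` and `i = 3` encoding `e`;
* `mkQ n t k v q idx` is the `idx`-th vertex of the `q`-th clique of `Q(v)`, where
  `q : Fin 4` encodes `Q_{1,2}(v), Q_{1,3}(v), Q_{2,3}(v), Q_e(v)` (each clique has
  `k - 1` vertices);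
* `mkY n t k j` is the vertex `y_j` of the independent set `Y`. -/
abbrev CompV (n t k : ℕ) : Type :=
  (({p : Fin n × Fin n // p.1 ≠ p.2} × Fin 4) ⊕ (Fin n × Fin 4 × Fin (k - 1))) ⊕ Fin t

def mkA (n t k : ℕ) (v u : Fin n) (h : v ≠ u) (i : Fin 4) : CompV n t k :=
  Sum.inl (Sum.inl (⟨(v, u), h⟩, i))

def mkQ (n t k : ℕ) (v : Fin n) (q : Fin 4) (idx : Fin (k - 1)) : CompV n t k :=
  Sum.inl (Sum.inr (v, q, idx))

def mkY (n t k : ℕ) (j : Fin t) : CompV n t k := Sum.inr j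

/-- Color index `i : Fin 4` belongs to clique index `q : Fin 4`, i.e. `A_i(v)` is
completely joined to the clique `Q_q(v)`:  `q = 0` is `Q_{1,2}`, `q = 1` is `Q_{1,3}`,
`q = 2` is `Q_{2,3}` and `q = 3` is `Q_e` (joined to `A_e(v)`, encoded by `i = 3`). -/
def inCliqueIdx (i q : Fin 4) : Prop :=
  (q = 0 ∧ (i = 0 ∨ i = 1)) ∨ (q = 1 ∧ (i = 0 ∨ i = 2)) ∨
    (q = 2 ∧ (i = 1 ∨ i = 2)) ∨ (q = 3 ∧ i = 3)

/-- Base (one-directional) edge relation of the composed graph; it is symmetrized by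
`SimpleGraph.fromRel` below.  The cases are: complete tripartite joins between
`A_1(v), A_2(v), A_3(v)` and the cross-gadget edges `v_i(u)u_i(v)` for `uv ∈ E(H_j)`;
the joins between `A_i(v)` and the cliques `Q_{i,ℓ}(v)` (and `A_e(v)` with `Q_e(v)`);
the four cliques of each `Q(v)`; edges from each `y_j` to all of `Q(G)`; and the edges
from `y_j` to `v_e(u)` when `uv ∈ E(H_j)` and to `v_1(u), v_2(u), v_3(u)` otherwise. -/
def baseRel (n t k : ℕ) (H : Fin t → SimpleGraph (Fin n)) :
    CompV n t k → CompV n t k → Prop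
  | Sum.inl (Sum.inl (⟨(v, u), _⟩, i)), Sum.inl (Sum.inl (⟨(v', u'), _⟩, i')) =>
      (v = v' ∧ i ≠ i' ∧ i ≠ 3 ∧ i' ≠ 3) ∨
        (i = i' ∧ i ≠ 3 ∧ v' = u ∧ u' = v ∧ ∃ j, (H j).Adj u v)
  | Sum.inl (Sum.inl (⟨(v, _), _⟩, i)), Sum.inl (Sum.inr (v', q, _)) =>
      v = v' ∧ inCliqueIdx i q
  | Sum.inl (Sum.inr (v, q, _)), Sum.inl (Sum.inr (v', q', _)) => v = v' ∧ q = q'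
  | Sum.inr _, Sum.inl (Sum.inr _) => True
  | Sum.inr j, Sum.inl (Sum.inl (⟨(v, u), _⟩, i)) =>
      ((H j).Adj v u ∧ i = 3) ∨ (¬ (H j).Adj v u ∧ i ≠ 3)
  | _, _ => False

/-- The graph `G` produced by the composition construction. -/
def compGraph (n t k : ℕ) (H : Fin t → SimpleGraph (Fin n)) : SimpleGraph (CompV n t k) :=
  SimpleGraph.fromRel (baseRel n t k H)

/-- The set `Q(G) = ⋃_{v} Q(v)` of all clique vertices. -/
def QSet (n t k : ℕ) : Set (CompV n t k) :=
  {x | ∃ v q idx, x = mkQ n t k v q idx}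

/-- The part `Y = {y_1, …, y_t}` of the partition `𝒱`. -/
def YPart (n t k : ℕ) : Finset (CompV n t k) :=
  Finset.univ.image (mkY n t k)

/-- The part `{v_1(u), v_2(u), v_3(u), v_e(u)}` of the partition `𝒱`. -/
def APart (n t k : ℕ) (v : Fin n) (u : {u : Fin n // v ≠ u}) : Finset (CompV n t k) :=
  Finset.univ.image (fun i : Fin 4 => mkA n t k v u.1 u.2 i)

/-- The singleton parts `{x}`, `x ∈ Q(v)`, of the partition `𝒱`. -/
def QSingles (n t k : ℕ) (v : Fin n) : Finset (Finset (CompV n t k)) :=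
  Finset.univ.image (fun p : Fin 4 × Fin (k - 1) => {mkQ n t k v p.1 p.2})

/-- The family `parts(G_v)` of parts contributed by the vertex gadget `G_v`. -/
def partsOf (n t k : ℕ) (v : Fin n) : Finset (Finset (CompV n t k)) :=
  (Finset.univ.image (fun u : {u : Fin n // v ≠ u} => APart n t k v u)) ∪ QSingles n t k v

/-- The partition `𝒱` of `V(G)`: the part `Y`, the parts `{v_1(u), v_2(u), v_3(u), v_e(u)}`
and the singleton parts `{x}` for `x ∈ Q(G)`. -/
def parts (n t k : ℕ) : Finset (Finset (CompV n t k)) :=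
  insert (YPart n t k) (Finset.univ.biUnion (partsOf n t k))

/-- A set of vertices is *selective* if it contains exactly one vertex of each part of
`𝒱` (the parts of `𝒱` cover all of `V(G)`, so it automatically contains no other
vertices). -/
def Selective (n t k : ℕ) (X : Set (CompV n t k)) : Prop :=
  ∀ P ∈ parts n t k, ∃! x, x ∈ X ∧ x ∈ P

/-- The vertex set of the gadget `G_v`. -/
def gadgetVerts (n t k : ℕ) (v : Fin n) : Finset (CompV n t k) :=
  (Finset.univ.image
      (fun p : {u : Fin n // v ≠ u} × Fin 4 => mkA n t k v p.1.1 p.1.2 p.2)) ∪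
    (Finset.univ.image (fun p : Fin 4 × Fin (k - 1) => mkQ n t k v p.1 p.2))


lemma key_color (n t k : ℕ) (hk : 1 ≤ k) (H : Fin t → SimpleGraph (Fin n)) (j : Fin t)
    (W : Set (CompV n t k)) (hy : mkY n t k j ∈ W) (hQ : QSet n t k ⊆ W)
    (ψ : CompV n t k → Fin k)
    (hψ : ∀ a ∈ W, ∀ b ∈ W, (compGraph n t k H).Adj a b → ψ a ≠ ψ b)
    (x : CompV n t k) (hx : x ∈ W) (v : Fin n) (q : Fin 4)
    (hadj : ∀ idx : Fin (k-1), (compGraph n t k H).Adj x (mkQ n t k v q idx)) :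
    ψ x = ψ (mkY n t k j) := by
  have hQW : ∀ idx : Fin (k-1), mkQ n t k v q idx ∈ W := fun idx => hQ ⟨v, q, idx, rfl⟩
  have hyadj : ∀ idx : Fin (k-1),
      (compGraph n t k H).Adj (mkY n t k j) (mkQ n t k v q idx) := by
    intro idx
    exact ⟨by simp [mkY, mkQ], Or.inl trivial⟩
  have hinj : Function.Injective (fun idx : Fin (k-1) => ψ (mkQ n t k v q idx)) := by
    intro a b hab
    by_contra hne
    exact hψ _ (hQW a) _ (hQW b)
      ⟨by simp [mkQ, hne], Or.inl ⟨rfl, rfl⟩⟩ hab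
  set S : Finset (Fin k) :=
    Finset.univ.image (fun idx : Fin (k-1) => ψ (mkQ n t k v q idx)) with hS
  have hcard : S.card = k - 1 := by
    rw [hS, Finset.card_image_of_injective _ hinj, Finset.card_univ, Fintype.card_fin]
  have hyS : ψ (mkY n t k j) ∉ S := by
    intro hmem
    rw [hS, Finset.mem_image] at hmem
    obtain ⟨idx, -, heq⟩ := hmem
    exact hψ _ hy _ (hQW idx) (hyadj idx) heq.symm
  have hxS : ψ x ∉ S := by
    intro hmem
    rw [hS, Finset.mem_image] at hmem
    obtain ⟨idx, -, heq⟩ := hmem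
    exact hψ _ hx _ (hQW idx) (hadj idx) heq.symm
  have huniv : insert (ψ (mkY n t k j)) S = Finset.univ := by
    apply Finset.eq_univ_of_card
    rw [Finset.card_insert_of_notMem hyS, hcard, Fintype.card_fin]
    omega
  have := Finset.mem_univ (ψ x)
  rw [← huniv, Finset.mem_insert] at this
  tauto

/-- Observation 6 of the paper.  Let `G` and `𝒱` be produced by the
composition construction from graphs `H_1, …, H_t` on vertex set `[n]` and `k ≥ 1`.
If `G*` is an induced subgraph of `G` whose vertex set `W` contains some `y_j ∈ Y` and
all of `Q(G)`, and `ψ` is a proper `k`-coloring of `G*`, then every vertex `u ∈ W` with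
`u ≠ y_j` satisfies `ψ u = ψ y_j` if and only if `u ∉ Q(G)`. -/
theorem comp_color_class_of_yj
    (n t k : ℕ) (hn : 2 ≤ n) (ht : 1 ≤ t) (hk : 1 ≤ k)
    (H : Fin t → SimpleGraph (Fin n)) (j : Fin t)
    (W : Set (CompV n t k)) (hy : mkY n t k j ∈ W) (hQ : QSet n t k ⊆ W)
    (ψ : CompV n t k → Fin k)
    (hψ : ∀ a ∈ W, ∀ b ∈ W, (compGraph n t k H).Adj a b → ψ a ≠ ψ b)
    (u : CompV n t k) (hu : u ∈ W) (hne : u ≠ mkY n t k j) :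
    ψ u = ψ (mkY n t k j) ↔ u ∉ QSet n t k := by
  constructor
  · intro heq huQ
    obtain ⟨v, q, idx, rfl⟩ := huQ
    exact hψ _ hu _ hy ⟨hne, Or.inr trivial⟩ (by rw [heq])
  · intro huQ
    obtain ((⟨⟨⟨v, u'⟩, h⟩, i⟩ | ⟨v, q, idx⟩) | j') := u
    · have hex : ∀ i : Fin 4, ∃ q, inCliqueIdx i q := by
        intro i; fin_cases i
        · exact ⟨0, Or.inl ⟨rfl, Or.inl rfl⟩⟩
        · exact ⟨0, Or.inl ⟨rfl, Or.inr rfl⟩⟩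
        · exact ⟨1, Or.inr (Or.inl ⟨rfl, Or.inr rfl⟩)⟩
        · exact ⟨3, Or.inr (Or.inr (Or.inr ⟨rfl, rfl⟩))⟩
      obtain ⟨q, hq⟩ := hex i
      exact key_color n t k hk H j W hy hQ ψ hψ _ hu v q
        (fun idx => ⟨by simp [mkA, mkQ], Or.inl ⟨rfl, hq⟩⟩)
    · exact absurd ⟨v, q, idx, rfl⟩ huQ
    · exact key_color n t k hk H j W hy hQ ψ hψ _ hu ⟨0, by omega⟩ 0
        (fun idx => ⟨by simp [mkY, mkQ], Or.inl trivial⟩)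

end
end

section
/- Let G and 𝒱 be the graph and partition produced by the composition construction (described in the context) from graphs H_1,…,H_t on vertex set [n] and an integer k ≥ 1. Then there exists a selective set X ⊆ V(G) such that the subgraph of G induced by X is properly k-colorable if and only if some graph H_j, j ∈ [t], admits a proper 3-coloring. -/
open Classical
noncomputable section

/-! ### Auxiliary lemmas -/

lemma exists_clique_idx : ∀ i : Fin 4, ∃ q, inCliqueIdx i q := by
  unfold inCliqueIdx; decide

section helpers

variable (n t k : ℕ) (H : Fin t → SimpleGraph (Fin n))

lemma qsingle_mem_parts (v : Fin n) (q : Fin 4) (c : Fin (k-1)) :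
    ({mkQ n t k v q c} : Finset (CompV n t k)) ∈ parts n t k := by
  refine Finset.mem_insert_of_mem (Finset.mem_biUnion.mpr ⟨v, Finset.mem_univ _, ?_⟩)
  exact Finset.mem_union_right _ (Finset.mem_image.mpr ⟨(q, c), Finset.mem_univ _, rfl⟩)

lemma apart_mem_parts (v : Fin n) (u : {u : Fin n // v ≠ u}) :
    APart n t k v u ∈ parts n t k := by
  refine Finset.mem_insert_of_mem (Finset.mem_biUnion.mpr ⟨v, Finset.mem_univ _, ?_⟩)
  exact Finset.mem_union_left _ (Finset.mem_image.mpr ⟨u, Finset.mem_univ _, rfl⟩)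

lemma adj_QQ {v : Fin n} {q : Fin 4} {c c' : Fin (k-1)} (hcc : c ≠ c') :
    (compGraph n t k H).Adj (mkQ n t k v q c) (mkQ n t k v q c') := by
  rw [compGraph, SimpleGraph.fromRel_adj]
  exact ⟨by simp [mkQ, hcc], Or.inl ⟨rfl, rfl⟩⟩

lemma adj_YQ (j : Fin t) (v : Fin n) (q : Fin 4) (c : Fin (k-1)) :
    (compGraph n t k H).Adj (mkY n t k j) (mkQ n t k v q c) := by
  rw [compGraph, SimpleGraph.fromRel_adj]
  exact ⟨by simp [mkY, mkQ], Or.inl trivial⟩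

lemma adj_AQ {v u : Fin n} {h : v ≠ u} {i q : Fin 4} {c : Fin (k-1)}
    (hiq : inCliqueIdx i q) :
    (compGraph n t k H).Adj (mkA n t k v u h i) (mkQ n t k v q c) := by
  rw [compGraph, SimpleGraph.fromRel_adj]
  exact ⟨by simp [mkA, mkQ], Or.inl ⟨rfl, hiq⟩⟩

lemma adj_YA {j : Fin t} {v u : Fin n} {h : v ≠ u} {i : Fin 4}
    (hcase : ((H j).Adj v u ∧ i = 3) ∨ (¬(H j).Adj v u ∧ i ≠ 3)) :
    (compGraph n t k H).Adj (mkY n t k j) (mkA n t k v u h i) := by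
  rw [compGraph, SimpleGraph.fromRel_adj]
  exact ⟨by simp [mkY, mkA], Or.inl hcase⟩

lemma adj_AA_tri {v u u' : Fin n} {h : v ≠ u} {h' : v ≠ u'} {i i' : Fin 4}
    (hii' : i ≠ i') (hi3 : i ≠ 3) (hi3' : i' ≠ 3) :
    (compGraph n t k H).Adj (mkA n t k v u h i) (mkA n t k v u' h' i') := by
  rw [compGraph, SimpleGraph.fromRel_adj]
  exact ⟨by simp [mkA, hii'], Or.inl (Or.inl ⟨rfl, hii', hi3, hi3'⟩)⟩

lemma adj_AA_cross {v u : Fin n} {hvu : v ≠ u} {huv : u ≠ v} {i i' : Fin 4}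
    (j : Fin t) (hadj : (H j).Adj u v) (hii' : i = i') (hi3 : i ≠ 3) :
    (compGraph n t k H).Adj (mkA n t k v u hvu i) (mkA n t k u v huv i') := by
  subst hii'
  rw [compGraph, SimpleGraph.fromRel_adj]
  exact ⟨by simp [mkA, hvu], Or.inl (Or.inr ⟨rfl, hi3, rfl, rfl, j, hadj⟩)⟩

end helpers

lemma forward_dir (n t k : ℕ) (hk : 1 ≤ k) (H : Fin t → SimpleGraph (Fin n))
    (X : Set (CompV n t k)) (hsel : Selective n t k X) (ψ : CompV n t k → Fin k)
    (hψ : ∀ a ∈ X, ∀ b ∈ X, (compGraph n t k H).Adj a b → ψ a ≠ ψ b) :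
    ∃ j : Fin t, ∃ φ : Fin n → Fin 3, ∀ a b : Fin n, (H j).Adj a b → φ a ≠ φ b := by
  classical
  -- the chosen vertex of Y
  obtain ⟨y, ⟨hyX, hyY⟩, -⟩ := hsel _ (Finset.mem_insert_self (YPart n t k) _)
  obtain ⟨j, -, rfl⟩ := Finset.mem_image.mp hyY
  -- all clique vertices belong to X
  have hQX : ∀ v q c, mkQ n t k v q c ∈ X := by
    intro v q c
    obtain ⟨x, ⟨hxX, hxP⟩, -⟩ := hsel _ (qsingle_mem_parts n t k v q c)
    rw [Finset.mem_singleton] at hxP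
    exact hxP ▸ hxX
  -- ψ is injective on each clique
  have hinj : ∀ (v : Fin n) (q : Fin 4),
      Function.Injective (fun c : Fin (k-1) => ψ (mkQ n t k v q c)) := by
    intro v q c c' hcc
    by_contra hne
    exact hψ _ (hQX v q c) _ (hQX v q c') (adj_QQ n t k H hne) hcc
  -- each clique together with y_j uses all k colours
  have hTuniv : ∀ (v : Fin n) (q : Fin 4),
      insert (ψ (mkY n t k j))
        (Finset.image (fun c : Fin (k-1) => ψ (mkQ n t k v q c)) Finset.univ)
        = (Finset.univ : Finset (Fin k)) := by
    intro v q
    apply Finset.eq_univ_of_card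
    rw [Finset.card_insert_of_notMem, Finset.card_image_of_injective _ (hinj v q)]
    · simp; omega
    · intro hmem
      obtain ⟨c, -, hc⟩ := Finset.mem_image.mp hmem
      exact hψ _ (hQX v q c) _ hyX ((adj_YQ n t k H j v q c).symm) hc
  -- a vertex of X adjacent to a whole clique must have the colour of y_j
  have keyPsi : ∀ (v : Fin n) (q : Fin 4) (a : CompV n t k), a ∈ X →
      (∀ c, (compGraph n t k H).Adj a (mkQ n t k v q c)) → ψ a = ψ (mkY n t k j) := by
    intro v q a ha hadj
    have hmem : ψ a ∈ insert (ψ (mkY n t k j))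
        (Finset.image (fun c : Fin (k-1) => ψ (mkQ n t k v q c)) Finset.univ) := by
      rw [hTuniv v q]; exact Finset.mem_univ _
    rcases Finset.mem_insert.mp hmem with h | h
    · exact h
    · obtain ⟨c, -, hc⟩ := Finset.mem_image.mp h
      exact absurd hc.symm (hψ a ha _ (hQX v q c) (hadj c))
  have keyContra : ∀ (v : Fin n) (q : Fin 4) (a : CompV n t k), a ∈ X →
      (∀ c, (compGraph n t k H).Adj a (mkQ n t k v q c)) →
      (compGraph n t k H).Adj (mkY n t k j) a → False := by
    intro v q a ha hq hy
    exact hψ _ hyX _ ha hy (keyPsi v q a ha hq).symm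
  -- the selected vertex of each A-part
  have hApart : ∀ (v u : Fin n) (h : v ≠ u), ∃ i : Fin 4,
      mkA n t k v u h i ∈ X ∧ ∀ i', mkA n t k v u h i' ∈ X → i' = i := by
    intro v u h
    obtain ⟨x, ⟨hxX, hxP⟩, hxu⟩ := hsel _ (apart_mem_parts n t k v ⟨u, h⟩)
    obtain ⟨i, -, rfl⟩ := Finset.mem_image.mp hxP
    refine ⟨i, hxX, fun i' hi' => ?_⟩
    have := hxu _ ⟨hi', Finset.mem_image.mpr ⟨i', Finset.mem_univ _, rfl⟩⟩
    simpa [mkA] using this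
  choose sel hselX hselU using hApart
  -- every selected A-vertex has the colour of y_j
  have hpsiSel : ∀ (v u : Fin n) (h : v ≠ u),
      ψ (mkA n t k v u h (sel v u h)) = ψ (mkY n t k j) := by
    intro v u h
    obtain ⟨q, hq⟩ := exists_clique_idx (sel v u h)
    exact keyPsi v q _ (hselX v u h) (fun c => adj_AQ n t k H hq)
  -- no selected A-vertex is adjacent to y_j
  have hnY : ∀ (v u : Fin n) (h : v ≠ u),
      ¬ (compGraph n t k H).Adj (mkY n t k j) (mkA n t k v u h (sel v u h)) := by
    intro v u h hadj
    obtain ⟨q, hq⟩ := exists_clique_idx (sel v u h)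
    exact keyContra v q _ (hselX v u h) (fun c => adj_AQ n t k H hq) hadj
  have hselAdj : ∀ (v u : Fin n) (h : v ≠ u), (H j).Adj v u → sel v u h ≠ 3 :=
    fun v u h hadj h3 => hnY v u h (adj_YA n t k H (Or.inl ⟨hadj, h3⟩))
  -- consistency of the selected index inside one gadget
  have hcons : ∀ (v u u' : Fin n) (h : v ≠ u) (h' : v ≠ u'),
      (H j).Adj v u → (H j).Adj v u' → sel v u h = sel v u' h' := by
    intro v u u' h h' ha1 ha2
    by_cases huu : u = u'
    · subst huu; rfl
    · by_contra hne
      have hadj := adj_AA_tri n t k H (h := h) (h' := h')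
        hne (hselAdj v u h ha1) (hselAdj v u' h' ha2)
      exact hψ _ (hselX v u h) _ (hselX v u' h') hadj
        (by rw [hpsiSel, hpsiSel])
  -- define the colouring of H_j
  obtain ⟨φ, hφval⟩ : ∃ φ : Fin n → Fin 3, ∀ (v u : Fin n) (h : v ≠ u),
      (H j).Adj v u → (φ v).val = (sel v u h).val % 3 := by
    refine ⟨fun v => if hx : ∃ u', ∃ h' : v ≠ u', (H j).Adj v u' then
      ⟨(sel v hx.choose hx.choose_spec.choose).val % 3, by omega⟩ else 0, ?_⟩
    intro v u h hadj
    have hx : ∃ u', ∃ h' : v ≠ u', (H j).Adj v u' := ⟨u, h, hadj⟩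
    beta_reduce
    rw [dif_pos hx]
    simp only
    rw [hcons v hx.choose u hx.choose_spec.choose h hx.choose_spec.choose_spec hadj]
  refine ⟨j, φ, fun a b hab hEq => ?_⟩
  have hne : a ≠ b := hab.ne
  have hne' : b ≠ a := Ne.symm hne
  have h1 := hφval a b hne hab
  have h2 := hφval b a hne' hab.symm
  have h3 : (φ a).val = (φ b).val := congrArg Fin.val hEq
  have hv1 : (sel a b hne).val ≠ 3 := fun hv => hselAdj a b hne hab (Fin.ext hv)
  have hv2 : (sel b a hne').val ≠ 3 := fun hv => hselAdj b a hne' hab.symm (Fin.ext hv)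
  have hlt1 := (sel a b hne).isLt
  have hlt2 := (sel b a hne').isLt
  have hEqSel : sel a b hne = sel b a hne' := Fin.ext (by omega)
  have hadjX := adj_AA_cross n t k H (hvu := hne) (huv := hne') j hab.symm hEqSel (fun hv => hselAdj a b hne hab hv)
  exact hψ _ (hselX a b hne) _ (hselX b a hne') hadjX
    (by rw [hpsiSel, hpsiSel])

/-! ### Backward direction: the construction of a selective choice from a 3-colouring -/

def selIdx (n : ℕ) (G : SimpleGraph (Fin n)) (φ : Fin n → Fin 3) (v u : Fin n) : Fin 4 :=
  if G.Adj v u then Fin.castLE (by omega) (φ v) else 3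

def Xset (n t k : ℕ) (G : SimpleGraph (Fin n)) (φ : Fin n → Fin 3) (j : Fin t) :
    Set (CompV n t k) := fun x =>
  match x with
  | Sum.inl (Sum.inl (⟨(v, u), _⟩, i)) => i = selIdx n G φ v u
  | Sum.inl (Sum.inr _) => True
  | Sum.inr j' => j' = j

def psi0 (n t k : ℕ) (hk : 1 ≤ k) : CompV n t k → Fin k := fun x =>
  match x with
  | Sum.inl (Sum.inr (_, _, c)) => ⟨c.val + 1, by have := c.isLt; omega⟩
  | _ => ⟨0, hk⟩

lemma backward_dir (n t k : ℕ) (hk : 1 ≤ k) (H : Fin t → SimpleGraph (Fin n))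
    (j : Fin t) (φ : Fin n → Fin 3) (hφ : ∀ a b : Fin n, (H j).Adj a b → φ a ≠ φ b) :
    ∃ X : Set (CompV n t k), Selective n t k X ∧
      ∃ ψ : CompV n t k → Fin k,
        ∀ a ∈ X, ∀ b ∈ X, (compGraph n t k H).Adj a b → ψ a ≠ ψ b := by
  classical
  refine ⟨Xset n t k (H j) φ j, ?_, psi0 n t k hk, ?_⟩
  · -- selectivity
    intro P hP
    rcases Finset.mem_insert.mp hP with rfl | hP
    · refine ⟨mkY n t k j, ⟨rfl, Finset.mem_image.mpr ⟨j, Finset.mem_univ _, rfl⟩⟩, ?_⟩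
      rintro x ⟨hx1, hx2⟩
      obtain ⟨j', -, rfl⟩ := Finset.mem_image.mp hx2
      have hj : j' = j := hx1
      rw [hj]
    · obtain ⟨v, -, hP⟩ := Finset.mem_biUnion.mp hP
      rcases Finset.mem_union.mp hP with hP | hP
      · obtain ⟨u, -, rfl⟩ := Finset.mem_image.mp hP
        refine ⟨mkA n t k v u.1 u.2 (selIdx n (H j) φ v u.1),
          ⟨rfl, Finset.mem_image.mpr ⟨_, Finset.mem_univ _, rfl⟩⟩, ?_⟩
        rintro x ⟨hx1, hx2⟩
        obtain ⟨i, -, rfl⟩ := Finset.mem_image.mp hx2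
        have hi : i = selIdx n (H j) φ v u.1 := hx1
        rw [hi]
      · obtain ⟨⟨q, c⟩, -, rfl⟩ := Finset.mem_image.mp hP
        refine ⟨mkQ n t k v q c, ⟨trivial, Finset.mem_singleton_self _⟩, ?_⟩
        rintro x ⟨-, hx2⟩
        exact Finset.mem_singleton.mp hx2
  · -- properness
    have hval3 : ∀ w : Fin n, (Fin.castLE (show 3 ≤ 4 by omega) (φ w)).val ≠ 3 := by
      intro w hw
      have := (φ w).isLt
      rw [Fin.coe_castLE] at hw
      omega
    have hsel1 : ∀ (w w' : Fin n) (ii : Fin 4), ii = selIdx n (H j) φ w w' → ii ≠ 3 →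
        (H j).Adj w w' ∧ ii = Fin.castLE (by omega) (φ w) := by
      intro w w' ii hii h3
      by_cases hadj : (H j).Adj w w'
      · exact ⟨hadj, by rwa [selIdx, if_pos hadj] at hii⟩
      · rw [selIdx, if_neg hadj] at hii; exact absurd hii h3
    have key : ∀ a ∈ Xset n t k (H j) φ j, ∀ b ∈ Xset n t k (H j) φ j, a ≠ b →
        baseRel n t k H a b → psi0 n t k hk a ≠ psi0 n t k hk b := by
      rintro a ha b hb hne hbr
      rcases a with (⟨⟨⟨v, u⟩, hvu⟩, i⟩ | ⟨v, q, c⟩) | j' <;>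
        rcases b with (⟨⟨⟨v', u'⟩, hv'u'⟩, i'⟩ | ⟨v', q', c'⟩) | j''
      · -- A -- A
        exfalso
        have ha' : i = selIdx n (H j) φ v u := ha
        have hb' : i' = selIdx n (H j) φ v' u' := hb
        rcases hbr with ⟨hvv', hii', hi3, hi3'⟩ | ⟨hii', hi3, hvu', huv', -⟩
        · obtain ⟨-, he1⟩ := hsel1 v u i ha' hi3
          obtain ⟨-, he2⟩ := hsel1 v' u' i' hb' hi3'
          rw [he1, he2, hvv'] at hii'
          exact hii' rfl
        · rw [hvu', huv'] at hb'
          obtain ⟨hadj1, he1⟩ := hsel1 v u i ha' hi3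
          obtain ⟨hadj2, he2⟩ := hsel1 u v i' hb' (hii' ▸ hi3)
          rw [he1, he2] at hii'
          have hvu2 : φ v = φ u := by
            apply Fin.ext
            have := congrArg Fin.val hii'
            rwa [Fin.coe_castLE, Fin.coe_castLE] at this
          exact hφ v u hadj1 hvu2
      · -- A -- Q
        intro hc
        have h1 := congrArg Fin.val hc
        have hz : (psi0 n t k hk (Sum.inl (Sum.inl (⟨(v, u), hvu⟩, i)))).val = 0 := rfl
        have hz' : (psi0 n t k hk (Sum.inl (Sum.inr (v', q', c')))).val = c'.val + 1 := rfl
        rw [hz, hz'] at h1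
        omega
      · exact absurd hbr (by exact fun h => h)
      · exact absurd hbr (by exact fun h => h)
      · -- Q -- Q
        obtain ⟨hvv', hqq'⟩ := hbr
        intro hc
        have h1 := congrArg Fin.val hc
        have hz : (psi0 n t k hk (Sum.inl (Sum.inr (v, q, c)))).val = c.val + 1 := rfl
        have hz' : (psi0 n t k hk (Sum.inl (Sum.inr (v', q', c')))).val = c'.val + 1 := rfl
        rw [hz, hz'] at h1
        have hcc : c = c' := Fin.ext (by omega)
        subst hvv'; subst hqq'; subst hcc
        exact hne rfl
      · exact absurd hbr (by exact fun h => h)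
      · -- Y -- A
        exfalso
        have hj : j' = j := ha
        subst hj
        have hb' : i' = selIdx n (H j') φ v' u' := hb
        rcases hbr with ⟨hadj, hi3⟩ | ⟨hnadj, hi3⟩
        · rw [selIdx, if_pos hadj] at hb'
          have := hval3 v'
          rw [← hb', hi3] at this
          exact this rfl
        · rw [selIdx, if_neg hnadj] at hb'
          exact hi3 hb'
      · -- Y -- Q
        intro hc
        have h1 := congrArg Fin.val hc
        have hz : (psi0 n t k hk (Sum.inr j' : CompV n t k)).val = 0 := rfl
        have hz' : (psi0 n t k hk (Sum.inl (Sum.inr (v', q', c')))).val = c'.val + 1 := rfl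
        rw [hz, hz'] at h1
        omega
      · exact absurd hbr (by exact fun h => h)
    intro a ha b hb hadj
    rw [compGraph, SimpleGraph.fromRel_adj] at hadj
    obtain ⟨hne, hbr | hbr⟩ := hadj
    · exact key a ha b hb hne hbr
    · exact (key b hb a ha hne.symm hbr).symm


/-- Lemma 7 of the paper, correctness of the OR-cross-composition.
Let `G` and `𝒱` be produced by the composition construction from graphs `H_1, …, H_t`
on vertex set `[n]` and `k ≥ 1`.  Then there is a selective set `X ⊆ V(G)` whose induced
subgraph is properly `k`-colorable if and only if some `H_j` admits a proper
`3`-coloring. -/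
theorem comp_selective_iff_some_three_colorable
    (n t k : ℕ) (hn : 2 ≤ n) (ht : 1 ≤ t) (hk : 1 ≤ k)
    (H : Fin t → SimpleGraph (Fin n)) :
    (∃ X : Set (CompV n t k), Selective n t k X ∧
      ∃ ψ : CompV n t k → Fin k,
        ∀ a ∈ X, ∀ b ∈ X, (compGraph n t k H).Adj a b → ψ a ≠ ψ b) ↔
    (∃ j : Fin t, ∃ φ : Fin n → Fin 3, ∀ a b : Fin n, (H j).Adj a b → φ a ≠ φ b) := by
  constructor
  · rintro ⟨X, hsel, ψ, hψ⟩
    exact forward_dir n t k hk H X hsel ψ hψ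
  · rintro ⟨j, φ, hφ⟩
    exact backward_dir n t k hk H j φ hφ

end
end

section
/- Let G and 𝒱 be the graph and partition produced by the composition construction (described in the context) from graphs H_1,…,H_t on vertex set [n] and an integer k ≥ 1, let j ∈ [t], and let φ be a proper 3-coloring of H_j. Define X = {y_j} ∪ Q(G) ∪ ⋃_{v ∈ [n]} (A_e(v) ∖ N_G(y_j)) ∪ ⋃_{i ∈ {1,2,3}} ⋃_{v : φ(v)=i} (A_i(v) ∖ N_G(y_j)), where N_G(y_j) denotes the set of neighbors of y_j in G. Then X is a selective set, and X ∖ Q(G) is an independent set in G. -/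
open Classical
noncomputable section

section Helpers

variable {n t k : ℕ} {H : Fin t → SimpleGraph (Fin n)}

lemma mkA_inj {v u v' u' : Fin n} {h : v ≠ u} {h' : v' ≠ u'} {i i' : Fin 4}
    (e : mkA n t k v u h i = mkA n t k v' u' h' i') : v = v' ∧ u = u' ∧ i = i' := by
  simp [mkA, Prod.ext_iff] at e
  tauto

lemma adj_Y_A {j : Fin t} {v u : Fin n} {h : v ≠ u} {i : Fin 4} :
    (compGraph n t k H).Adj (mkY n t k j) (mkA n t k v u h i) ↔
      ((H j).Adj v u ∧ i = 3) ∨ (¬ (H j).Adj v u ∧ i ≠ 3) := by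
  rw [compGraph, SimpleGraph.fromRel_adj]
  constructor
  · rintro ⟨-, hr | hr⟩
    · exact hr
    · exact absurd hr (fun x => x)
  · intro hr
    exact ⟨by simp [mkY, mkA], Or.inl hr⟩

lemma adj_A_A {v u v' u' : Fin n} {h : v ≠ u} {h' : v' ≠ u'} {i i' : Fin 4} :
    (compGraph n t k H).Adj (mkA n t k v u h i) (mkA n t k v' u' h' i') ↔
      mkA n t k v u h i ≠ mkA n t k v' u' h' i' ∧
      (((v = v' ∧ i ≠ i' ∧ i ≠ 3 ∧ i' ≠ 3) ∨
          (i = i' ∧ i ≠ 3 ∧ v' = u ∧ u' = v ∧ ∃ j, (H j).Adj u v)) ∨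
       ((v' = v ∧ i' ≠ i ∧ i' ≠ 3 ∧ i ≠ 3) ∨
          (i' = i ∧ i' ≠ 3 ∧ v = u' ∧ u = v' ∧ ∃ j, (H j).Adj u' v'))) := by
  rw [compGraph, SimpleGraph.fromRel_adj]
  rfl

lemma castSucc_ne_three (c : Fin 3) : (c.castSucc : Fin 4) ≠ 3 := by
  fin_cases c <;> decide

end Helpers

/-- key intermediate claim in the forward direction of Lemma 7.
Let `G` and `𝒱` be produced by the composition construction from `H_1, …, H_t` on
vertex set `[n]` and `k ≥ 1`, let `j ∈ [t]` and let `φ` be a proper `3`-coloring of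
`H_j`.  Let `X = {y_j} ∪ Q(G) ∪ ⋃_v (A_e(v) ∖ N_G(y_j)) ∪
⋃_{i ∈ {1,2,3}} ⋃_{v : φ v = i} (A_i(v) ∖ N_G(y_j))`.  Then `X` is selective and
`X ∖ Q(G)` is an independent set in `G`. -/
theorem comp_forward_selective_and_independent
    (n t k : ℕ) (hn : 2 ≤ n) (ht : 1 ≤ t) (hk : 1 ≤ k)
    (H : Fin t → SimpleGraph (Fin n)) (j : Fin t)
    (φ : Fin n → Fin 3) (hφ : ∀ a b : Fin n, (H j).Adj a b → φ a ≠ φ b)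
    (X : Set (CompV n t k))
    (hX : X = {mkY n t k j} ∪ QSet n t k ∪
      {x | ∃ (v u : Fin n) (h : v ≠ u), x = mkA n t k v u h 3 ∧
            ¬ (compGraph n t k H).Adj (mkY n t k j) x} ∪
      {x | ∃ (i : Fin 3) (v u : Fin n) (h : v ≠ u), φ v = i ∧
            x = mkA n t k v u h i.castSucc ∧
            ¬ (compGraph n t k H).Adj (mkY n t k j) x}) :
    Selective n t k X ∧
    ∀ a ∈ X \ QSet n t k, ∀ b ∈ X \ QSet n t k, ¬ (compGraph n t k H).Adj a b := by
  have hcs : ∀ c : Fin 3, (c.castSucc : Fin 4) ≠ 3 := castSucc_ne_three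
  -- membership characterization
  have hmem : ∀ x, x ∈ X ↔ (x = mkY n t k j ∨ (∃ v q idx, x = mkQ n t k v q idx) ∨
      (∃ v u, ∃ h : v ≠ u, x = mkA n t k v u h 3 ∧ ¬ (H j).Adj v u) ∨
      (∃ v u, ∃ h : v ≠ u, x = mkA n t k v u h (φ v).castSucc ∧ (H j).Adj v u)) := by
    intro x
    rw [hX]
    simp only [Set.mem_union, Set.mem_singleton_iff, Set.mem_setOf_eq, QSet]
    constructor
    · rintro (((h1 | h1) | ⟨v, u, hvu, rfl, hna⟩) | ⟨i, v, u, hvu, hfi, rfl, hna⟩)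
      · exact Or.inl h1
      · exact Or.inr (Or.inl h1)
      · refine Or.inr (Or.inr (Or.inl ⟨v, u, hvu, rfl, fun ha => ?_⟩))
        exact hna (adj_Y_A.mpr (Or.inl ⟨ha, rfl⟩))
      · refine Or.inr (Or.inr (Or.inr ⟨v, u, hvu, by rw [hfi], ?_⟩))
        by_contra hc
        exact hna (adj_Y_A.mpr (Or.inr ⟨hc, hcs i⟩))
    · rintro (h1 | h1 | ⟨v, u, hvu, rfl, hna⟩ | ⟨v, u, hvu, rfl, hadj⟩)
      · exact Or.inl (Or.inl (Or.inl h1))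
      · exact Or.inl (Or.inl (Or.inr h1))
      · refine Or.inl (Or.inr ⟨v, u, hvu, rfl, fun ha => ?_⟩)
        rcases adj_Y_A.mp ha with ⟨ha', -⟩ | ⟨-, h3⟩
        · exact hna ha'
        · exact h3 rfl
      · refine Or.inr ⟨φ v, v, u, hvu, rfl, rfl, fun ha => ?_⟩
        rcases adj_Y_A.mp ha with ⟨-, h3⟩ | ⟨hna, -⟩
        · exact hcs (φ v) h3
        · exact hna hadj
  constructor
  · -- Selectivity
    intro P hP
    simp only [parts, Finset.mem_insert, Finset.mem_biUnion, Finset.mem_univ, true_and] at hP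
    rcases hP with rfl | ⟨v, hP⟩
    · -- the part Y
      refine ⟨mkY n t k j, ⟨(hmem _).mpr (Or.inl rfl), ?_⟩, ?_⟩
      · simp [YPart]
      · rintro x ⟨hx, hxY⟩
        simp only [YPart, Finset.mem_image, Finset.mem_univ, true_and] at hxY
        obtain ⟨j', rfl⟩ := hxY
        rcases (hmem _).mp hx with h1 | ⟨a, b, c, h1⟩ | ⟨a, b, c, h1, -⟩ | ⟨a, b, c, h1, -⟩
        · exact h1
        all_goals simp [mkY, mkQ, mkA] at h1
    · simp only [partsOf, Finset.mem_union, Finset.mem_image, Finset.mem_univ, true_and,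
        QSingles] at hP
      rcases hP with ⟨u, rfl⟩ | ⟨⟨q, idx⟩, rfl⟩
      · -- the part A(v, u)
        by_cases hadj : (H j).Adj v u.1
        · refine ⟨mkA n t k v u.1 u.2 (φ v).castSucc,
            ⟨(hmem _).mpr (Or.inr (Or.inr (Or.inr ⟨v, u.1, u.2, rfl, hadj⟩))), ?_⟩, ?_⟩
          · simp only [APart, Finset.mem_image, Finset.mem_univ, true_and]
            exact ⟨(φ v).castSucc, rfl⟩
          · rintro x ⟨hx, hxA⟩
            simp only [APart, Finset.mem_image, Finset.mem_univ, true_and] at hxA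
            obtain ⟨i, rfl⟩ := hxA
            rcases (hmem _).mp hx with h1 | ⟨a, b, c, h1⟩ |
                ⟨a, b, c, h1, hna⟩ | ⟨a, b, c, h1, -⟩
            · simp [mkY, mkA] at h1
            · simp [mkQ, mkA] at h1
            · obtain ⟨rfl, rfl, rfl⟩ := mkA_inj h1
              exact absurd hadj hna
            · obtain ⟨rfl, rfl, rfl⟩ := mkA_inj h1
              rfl
        · refine ⟨mkA n t k v u.1 u.2 3,
            ⟨(hmem _).mpr (Or.inr (Or.inr (Or.inl ⟨v, u.1, u.2, rfl, hadj⟩))), ?_⟩, ?_⟩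
          · simp only [APart, Finset.mem_image, Finset.mem_univ, true_and]
            exact ⟨3, rfl⟩
          · rintro x ⟨hx, hxA⟩
            simp only [APart, Finset.mem_image, Finset.mem_univ, true_and] at hxA
            obtain ⟨i, rfl⟩ := hxA
            rcases (hmem _).mp hx with h1 | ⟨a, b, c, h1⟩ |
                ⟨a, b, c, h1, -⟩ | ⟨a, b, c, h1, hadj'⟩
            · simp [mkY, mkA] at h1
            · simp [mkQ, mkA] at h1
            · obtain ⟨rfl, rfl, rfl⟩ := mkA_inj h1
              rfl
            · obtain ⟨rfl, rfl, rfl⟩ := mkA_inj h1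
              exact absurd hadj' hadj
      · -- a singleton part from Q(v)
        refine ⟨mkQ n t k v q idx,
          ⟨(hmem _).mpr (Or.inr (Or.inl ⟨v, q, idx, rfl⟩)), by simp⟩, ?_⟩
        rintro x ⟨-, hx⟩
        simpa using hx
  · -- Independence of X \ Q(G)
    have key : ∀ (va ua vb ub : Fin n) (h1 : va ≠ ua) (h2 : vb ≠ ub) (ia ib : Fin 4),
        ((ia = 3 ∧ ¬ (H j).Adj va ua) ∨ (ia = (φ va).castSucc ∧ (H j).Adj va ua)) →
        ((ib = 3 ∧ ¬ (H j).Adj vb ub) ∨ (ib = (φ vb).castSucc ∧ (H j).Adj vb ub)) →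
        ¬ (compGraph n t k H).Adj (mkA n t k va ua h1 ia) (mkA n t k vb ub h2 ib) := by
      rintro va ua vb ub h1 h2 ia ib ca cb hab
      obtain ⟨-, hr⟩ := adj_A_A.mp hab
      rcases hr with (⟨hvv, hii, hi3, hi3'⟩ | ⟨hii, hi3, hvu, huv, -⟩) |
          (⟨hvv, hii, hi3', hi3⟩ | ⟨hii, hi3', hvu, huv, -⟩)
      · rcases ca with ⟨rfl, -⟩ | ⟨rfl, -⟩
        · exact hi3 rfl
        rcases cb with ⟨rfl, -⟩ | ⟨rfl, -⟩
        · exact hi3' rfl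
        subst hvv
        exact hii rfl
      · rcases ca with ⟨rfl, -⟩ | ⟨rfl, hadja⟩
        · exact hi3 rfl
        rcases cb with ⟨rfl, -⟩ | ⟨rfl, -⟩
        · exact hi3 hii
        have hc := Fin.castSucc_inj.mp hii
        rw [hvu] at hc
        exact hφ va ua hadja hc
      · rcases ca with ⟨rfl, -⟩ | ⟨rfl, -⟩
        · exact hi3 rfl
        rcases cb with ⟨rfl, -⟩ | ⟨rfl, -⟩
        · exact hi3' rfl
        subst hvv
        exact hii rfl
      · rcases cb with ⟨rfl, -⟩ | ⟨rfl, hadjb⟩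
        · exact hi3' rfl
        rcases ca with ⟨rfl, -⟩ | ⟨rfl, -⟩
        · exact hi3' hii
        have hc := Fin.castSucc_inj.mp hii
        rw [hvu] at hc
        exact hφ vb ub hadjb hc
    have notQ : ∀ x ∈ X \ QSet n t k,
        x = mkY n t k j ∨
        ∃ v u, ∃ h : v ≠ u, ∃ i,
          x = mkA n t k v u h i ∧
          ((i = 3 ∧ ¬ (H j).Adj v u) ∨ (i = (φ v).castSucc ∧ (H j).Adj v u)) := by
      rintro x ⟨hx, hxQ⟩
      rcases (hmem _).mp hx with h1 | h1 | ⟨v, u, h, rfl, hna⟩ | ⟨v, u, h, rfl, hadj⟩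
      · exact Or.inl h1
      · exact absurd h1 hxQ
      · exact Or.inr ⟨v, u, h, 3, rfl, Or.inl ⟨rfl, hna⟩⟩
      · exact Or.inr ⟨v, u, h, _, rfl, Or.inr ⟨rfl, hadj⟩⟩
    intro a ha b hb hab
    rcases notQ a ha with rfl | ⟨va, ua, h1, ia, rfl, ca⟩
    · rcases notQ b hb with rfl | ⟨vb, ub, h2, ib, rfl, cb⟩
      · exact hab.ne rfl
      · rcases adj_Y_A.mp hab with ⟨hadj, h3⟩ | ⟨hna, h3⟩
        · rcases cb with ⟨-, hna⟩ | ⟨rfl, -⟩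
          · exact hna hadj
          · exact hcs _ h3
        · rcases cb with ⟨rfl, -⟩ | ⟨-, hadj⟩
          · exact h3 rfl
          · exact hna hadj
    · rcases notQ b hb with rfl | ⟨vb, ub, h2, ib, rfl, cb⟩
      · rcases adj_Y_A.mp hab.symm with ⟨hadj, h3⟩ | ⟨hna, h3⟩
        · rcases ca with ⟨-, hna⟩ | ⟨rfl, -⟩
          · exact hna hadj
          · exact hcs _ h3
        · rcases ca with ⟨rfl, -⟩ | ⟨-, hadj⟩
          · exact h3 rfl
          · exact hna hadj
      · exact key va ua vb ub h1 h2 ia ib ca cb hab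

end
end

section
/- Let G and 𝒱 be the graph and partition produced by the composition construction (described in the context) from graphs H_1,…,H_t on vertex set [n] and an integer k ≥ 1. Let G* be an induced subgraph of G whose vertex set contains some y_j ∈ Y and all of Q(G). If G* admits a proper k-coloring, then V(G*) ∖ Q(G) is an independent set in G. -/
open Classical
noncomputable section

/-- key intermediate claim in the backward direction of Lemma 7.
Let `G` and `𝒱` be produced by the composition construction from `H_1, …, H_t` on
vertex set `[n]` and `k ≥ 1`.  If `G*` is an induced subgraph of `G` whose vertex set
`W` contains some `y_j ∈ Y` and all of `Q(G)`, and `G*` admits a proper `k`-coloring,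
then `W ∖ Q(G)` is an independent set in `G`. -/
theorem comp_backward_independent
    (n t k : ℕ) (hn : 2 ≤ n) (ht : 1 ≤ t) (hk : 1 ≤ k)
    (H : Fin t → SimpleGraph (Fin n)) (j : Fin t)
    (W : Set (CompV n t k)) (hy : mkY n t k j ∈ W) (hQ : QSet n t k ⊆ W)
    (hcol : ∃ ψ : CompV n t k → Fin k,
      ∀ a ∈ W, ∀ b ∈ W, (compGraph n t k H).Adj a b → ψ a ≠ ψ b) :
    ∀ a ∈ W \ QSet n t k, ∀ b ∈ W \ QSet n t k, ¬ (compGraph n t k H).Adj a b := by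
  obtain ⟨ψ, hψ⟩ := hcol
  have hQmem : ∀ (v : Fin n) (q : Fin 4) (idx : Fin (k-1)), mkQ n t k v q idx ∈ W :=
    fun v q idx => hQ ⟨v, q, idx, rfl⟩
  -- y_j is adjacent to every clique vertex
  have hyadj : ∀ (v : Fin n) (q : Fin 4) (idx : Fin (k-1)),
      (compGraph n t k H).Adj (mkY n t k j) (mkQ n t k v q idx) := by
    intro v q idx
    rw [compGraph, SimpleGraph.fromRel_adj]
    exact ⟨by simp [mkY, mkQ], Or.inl (by simp [baseRel, mkY, mkQ])⟩
  -- key: any x in W adjacent to all of a clique has color ψ y_j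
  have key : ∀ x ∈ W, ∀ (v : Fin n) (q : Fin 4),
      (∀ idx, (compGraph n t k H).Adj x (mkQ n t k v q idx)) →
      ψ x = ψ (mkY n t k j) := by
    intro x hx v q hadj
    set f : Fin (k-1) → Fin k := fun idx => ψ (mkQ n t k v q idx) with hf
    have hinj : Function.Injective f := by
      intro a b hab
      by_contra hne
      refine hψ _ (hQmem v q a) _ (hQmem v q b) ?_ hab
      rw [compGraph, SimpleGraph.fromRel_adj]
      exact ⟨by simp [mkQ, hne], Or.inl (by simp [baseRel, mkQ])⟩
    set S : Finset (Fin k) := Finset.univ.image f with hS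
    have hcardS : S.card = k - 1 := by
      rw [hS, Finset.card_image_of_injective _ hinj, Finset.card_univ, Fintype.card_fin]
    have hynotin : ψ (mkY n t k j) ∉ S := by
      simp only [hS, Finset.mem_image, Finset.mem_univ, true_and]
      rintro ⟨idx, hidx⟩
      exact hψ _ hy _ (hQmem v q idx) (hyadj v q idx) hidx.symm
    have hcard : (insert (ψ (mkY n t k j)) S).card = k := by
      rw [Finset.card_insert_of_notMem hynotin, hcardS]
      omega
    have huniv : insert (ψ (mkY n t k j)) S = Finset.univ := by
      apply Finset.eq_univ_of_card
      rw [hcard, Fintype.card_fin]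
    have hxnotin : ψ x ∉ S := by
      simp only [hS, Finset.mem_image, Finset.mem_univ, true_and]
      rintro ⟨idx, hidx⟩
      exact hψ _ hx _ (hQmem v q idx) (hadj idx) hidx.symm
    have : ψ x ∈ insert (ψ (mkY n t k j)) S := by rw [huniv]; exact Finset.mem_univ _
    rcases Finset.mem_insert.mp this with h | h
    · exact h
    · exact absurd h hxnotin
  -- every vertex of W \ Q(G) has color ψ y_j
  have same : ∀ x ∈ W, x ∉ QSet n t k → ψ x = ψ (mkY n t k j) := by
    rintro x hx hxQ
    match x with
    | Sum.inl (Sum.inr (v, q, idx)) => exact absurd ⟨v, q, idx, rfl⟩ hxQ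
    | Sum.inr j' =>
        apply key _ hx ⟨0, by omega⟩ 0
        intro idx
        rw [compGraph, SimpleGraph.fromRel_adj]
        exact ⟨by simp [mkQ], Or.inl (by simp [baseRel, mkQ])⟩
    | Sum.inl (Sum.inl (⟨(v, u), hvu⟩, i)) =>
        have hex : ∃ q, inCliqueIdx i q := by
          fin_cases i
          · exact ⟨0, Or.inl ⟨rfl, Or.inl rfl⟩⟩
          · exact ⟨0, Or.inl ⟨rfl, Or.inr rfl⟩⟩
          · exact ⟨1, Or.inr (Or.inl ⟨rfl, Or.inr rfl⟩)⟩
          · exact ⟨3, Or.inr (Or.inr (Or.inr ⟨rfl, rfl⟩))⟩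
        obtain ⟨q, hq⟩ := hex
        apply key _ hx v q
        intro idx
        rw [compGraph, SimpleGraph.fromRel_adj]
        refine ⟨by simp [mkQ], Or.inl ?_⟩
        show baseRel n t k H (Sum.inl (Sum.inl (⟨(v, u), hvu⟩, i))) (mkQ n t k v q idx)
        exact ⟨rfl, hq⟩
  rintro a ⟨haW, haQ⟩ b ⟨hbW, hbQ⟩ hadj
  exact hψ _ haW _ hbW hadj ((same a haW haQ).trans (same b hbW hbQ).symm)

end
end

section
/- Let G and 𝒱 be the graph and partition produced by the composition construction (described in the context) from graphs H_1,…,H_t on vertex set [n] and an integer k ≥ 1. Then: (i) for every v ∈ [n], the vertex gadget G_v has exactly 4(n + k − 2) vertices and contributes exactly n + 4k − 5 parts to 𝒱; (ii) the set V(G) ∖ Y is a vertex cover of G of size 4n² + 4n(k − 2); and (iii) the total number of parts of 𝒱 is n² + n(4k − 5) + 1. -/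
open Classical
noncomputable section

section AuxComp

def owner {n t k : ℕ} : CompV n t k → Option (Fin n)
  | Sum.inl (Sum.inl (⟨(v, _), _⟩, _)) => some v
  | Sum.inl (Sum.inr (v, _, _)) => some v
  | Sum.inr _ => none

@[simp] lemma owner_mkA {n t k : ℕ} (v u : Fin n) (h : v ≠ u) (i : Fin 4) :
    owner (mkA n t k v u h i) = some v := rfl

@[simp] lemma owner_mkQ {n t k : ℕ} (v : Fin n) (q : Fin 4) (idx : Fin (k-1)) :
    owner (mkQ n t k v q idx) = some v := rfl

lemma mem_APart {n t k : ℕ} {v : Fin n} {u : {u : Fin n // v ≠ u}} {x : CompV n t k} :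
    x ∈ APart n t k v u ↔ ∃ i : Fin 4, mkA n t k v u.1 u.2 i = x := by
  simp [APart]

lemma owner_of_mem_partsOf {n t k : ℕ} {v : Fin n} {P : Finset (CompV n t k)}
    (hP : P ∈ partsOf n t k v) {x : CompV n t k} (hx : x ∈ P) : owner x = some v := by
  simp only [partsOf, Finset.mem_union, Finset.mem_image, Finset.mem_univ, true_and,
    QSingles] at hP
  rcases hP with ⟨u, rfl⟩ | ⟨p, _, rfl⟩
  · rcases mem_APart.mp hx with ⟨i, rfl⟩; simp
  · simp only [Finset.mem_singleton] at hx; subst hx; simp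

lemma partsOf_nonempty {n t k : ℕ} {v : Fin n} {P : Finset (CompV n t k)}
    (hP : P ∈ partsOf n t k v) : P.Nonempty := by
  simp only [partsOf, Finset.mem_union, Finset.mem_image, Finset.mem_univ, true_and,
    QSingles] at hP
  rcases hP with ⟨u, rfl⟩ | ⟨p, _, rfl⟩
  · exact ⟨mkA n t k v u.1 u.2 0, mem_APart.mpr ⟨0, rfl⟩⟩
  · exact ⟨_, Finset.mem_singleton_self _⟩

lemma mem_YPart {n t k : ℕ} {x : CompV n t k} :
    x ∈ YPart n t k ↔ ∃ j : Fin t, x = Sum.inr j := by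
  simp [YPart, mkY, eq_comm]

def diagEquiv (n : ℕ) : {p : Fin n × Fin n // p.1 = p.2} ≃ Fin n where
  toFun p := p.1.1
  invFun v := ⟨(v, v), rfl⟩
  left_inv p := by obtain ⟨⟨a, b⟩, h⟩ := p; cases h; rfl
  right_inv v := rfl

lemma card_ne_diag (n : ℕ) : Fintype.card {p : Fin n × Fin n // p.1 ≠ p.2} = n * n - n := by
  have h1 := Fintype.card_subtype_compl (fun p : Fin n × Fin n => p.1 = p.2)
  rw [h1, Fintype.card_congr (diagEquiv n)]
  simp

lemma card_gadgetVerts {n t k : ℕ} (v : Fin n) :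
    (gadgetVerts n t k v).card = (n - 1) * 4 + 4 * (k - 1) := by
  rw [gadgetVerts, Finset.card_union_of_disjoint]
  · have h1 : Function.Injective
        (fun p : {u : Fin n // v ≠ u} × Fin 4 => mkA n t k v p.1.1 p.1.2 p.2) := by
      rintro ⟨⟨a, ha⟩, i⟩ ⟨⟨b, hb⟩, j⟩ h
      simp only [mkA, Sum.inl.injEq, Prod.mk.injEq, Subtype.mk.injEq] at h
      simp [h.1.2, h.2]
    have h2 : Function.Injective
        (fun p : Fin 4 × Fin (k - 1) => mkQ n t k v p.1 p.2) := by
      rintro ⟨a, i⟩ ⟨b, j⟩ h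
      simp only [mkQ, Sum.inl.injEq, Sum.inr.injEq, Prod.mk.injEq] at h
      simp [h.1, h.2]
    rw [Finset.card_image_of_injective _ h1, Finset.card_image_of_injective _ h2]
    simp only [Finset.card_univ, Fintype.card_prod, Fintype.card_fin]
    congr 1
    have : Fintype.card {u : Fin n // v ≠ u} = n - 1 := by
      rw [Fintype.card_congr (Equiv.subtypeEquivRight (fun u => ne_comm)),
        Fintype.card_subtype_compl, Fintype.card_subtype_eq, Fintype.card_fin]
    rw [this]
  · rw [Finset.disjoint_left]
    rintro x hx hx'
    simp only [Finset.mem_image, Finset.mem_univ, true_and] at hx hx'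
    obtain ⟨p, rfl⟩ := hx
    obtain ⟨q, hq⟩ := hx'
    simp [mkA, mkQ] at hq

lemma APart_inj {n t k : ℕ} (v : Fin n) :
    Function.Injective (fun u : {u : Fin n // v ≠ u} => APart n t k v u) := by
  intro a b h
  have h' : APart n t k v a = APart n t k v b := h
  have : mkA n t k v a.1 a.2 0 ∈ APart n t k v b := by
    rw [← h']; exact mem_APart.mpr ⟨0, rfl⟩
  rcases mem_APart.mp this with ⟨i, hi⟩
  simp only [mkA, Sum.inl.injEq, Prod.mk.injEq, Subtype.mk.injEq, true_and] at hi
  exact Subtype.ext hi.1.symm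

lemma card_partsOf {n t k : ℕ} (v : Fin n) :
    (partsOf n t k v).card = (n - 1) + 4 * (k - 1) := by
  rw [partsOf, Finset.card_union_of_disjoint]
  · have h2 : Function.Injective
        (fun p : Fin 4 × Fin (k - 1) => ({mkQ n t k v p.1 p.2} : Finset (CompV n t k))) := by
      rintro ⟨a, i⟩ ⟨b, j⟩ h
      simp only [Finset.singleton_inj, mkQ, Sum.inl.injEq, Sum.inr.injEq,
        Prod.mk.injEq] at h
      simp [h.1, h.2]
    rw [Finset.card_image_of_injective _ (APart_inj v), QSingles,
      Finset.card_image_of_injective _ h2]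
    simp only [Finset.card_univ, Fintype.card_prod, Fintype.card_fin]
    congr 1
    rw [Fintype.card_congr (Equiv.subtypeEquivRight (fun u => ne_comm)),
      Fintype.card_subtype_compl, Fintype.card_subtype_eq, Fintype.card_fin]
  · rw [Finset.disjoint_left]
    rintro P hP hP'
    simp only [Finset.mem_image, Finset.mem_univ, true_and, QSingles] at hP hP'
    obtain ⟨u, rfl⟩ := hP
    obtain ⟨p, hp⟩ := hP'
    have : mkA n t k v u.1 u.2 0 ∈ ({mkQ n t k v p.1 p.2} : Finset (CompV n t k)) := by
      rw [hp]; exact mem_APart.mpr ⟨0, rfl⟩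
    simp [mkA, mkQ] at this

lemma card_YPart (n t k : ℕ) : (YPart n t k).card = t := by
  have hinj : Function.Injective (mkY n t k) := fun a b h => Sum.inr.inj h
  rw [YPart, Finset.card_image_of_injective _ hinj, Finset.card_univ, Fintype.card_fin]

end AuxComp

/-- Lemma 8 of the paper.  Let `G` and `𝒱` be produced by the
composition construction from graphs `H_1, …, H_t` on vertex set `[n]` and `k ≥ 1`.
Then (i) each vertex gadget `G_v` has exactly `4(n + k - 2)` vertices and contributes
exactly `n + 4k - 5` parts to `𝒱`; (ii) `V(G) ∖ Y` is a vertex cover of `G` of size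
`4n² + 4n(k - 2)`; and (iii) `𝒱` has exactly `n² + n(4k - 5) + 1` parts.
(The cardinalities are stated in `ℤ`, as in the paper's arithmetic.) -/
theorem comp_vertex_cover_and_parts_count
    (n t k : ℕ) (hn : 2 ≤ n) (ht : 1 ≤ t) (hk : 1 ≤ k)
    (H : Fin t → SimpleGraph (Fin n)) :
    (∀ v : Fin n,
      ((gadgetVerts n t k v).card : ℤ) = 4 * ((n : ℤ) + (k : ℤ) - 2) ∧
      ((partsOf n t k v).card : ℤ) = (n : ℤ) + 4 * (k : ℤ) - 5) ∧
    ((∀ a b : CompV n t k, (compGraph n t k H).Adj a b →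
        a ∈ (Finset.univ \ YPart n t k) ∨ b ∈ (Finset.univ \ YPart n t k)) ∧
      (((Finset.univ \ YPart n t k : Finset (CompV n t k))).card : ℤ) =
        4 * (n : ℤ) ^ 2 + 4 * (n : ℤ) * ((k : ℤ) - 2)) ∧
    ((parts n t k).card : ℤ) = (n : ℤ) ^ 2 + (n : ℤ) * (4 * (k : ℤ) - 5) + 1 := by
  have hn1 : 1 ≤ n := le_trans (by norm_num) hn
  refine ⟨?_, ⟨?_, ?_⟩, ?_⟩
  · intro v
    constructor
    · rw [card_gadgetVerts]
      zify [hn1, hk]; ring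
    · rw [card_partsOf]
      zify [hn1, hk]; ring
  · -- vertex cover
    intro a b hab
    rcases a with a | j
    · left; simp [YPart, mkY]
    · rcases b with b | j'
      · right; simp [YPart, mkY]
      · exfalso
        rw [compGraph, SimpleGraph.fromRel_adj] at hab
        rcases hab.2 with h | h <;> exact h
  · -- size of vertex cover
    have hsub : YPart n t k ⊆ Finset.univ := Finset.subset_univ _
    rw [Finset.card_sdiff_of_subset hsub, card_YPart]
    have hcard : Fintype.card (CompV n t k) = (n * n - n) * 4 + n * (4 * (k - 1)) + t := by
      simp only [Fintype.card_sum, Fintype.card_prod, Fintype.card_fin, card_ne_diag]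
    rw [Finset.card_univ, hcard]
    have hle : t ≤ (n * n - n) * 4 + n * (4 * (k - 1)) + t := by omega
    have hnn : n ≤ n * n := Nat.le_mul_of_pos_left n (by omega)
    zify [hn1, hk, hle, hnn]
    ring
  · -- number of parts
    have hnotmem : YPart n t k ∉ Finset.univ.biUnion (partsOf n t k) := by
      intro hmem
      rw [Finset.mem_biUnion] at hmem
      obtain ⟨v, _, hv⟩ := hmem
      have hy : (Sum.inr ⟨0, ht⟩ : CompV n t k) ∈ YPart n t k :=
        mem_YPart.mpr ⟨⟨0, ht⟩, rfl⟩
      have := owner_of_mem_partsOf hv hy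
      simp [owner] at this
    have hdisj : ∀ v ∈ (Finset.univ : Finset (Fin n)), ∀ w ∈ (Finset.univ : Finset (Fin n)),
        v ≠ w → Disjoint (partsOf n t k v) (partsOf n t k w) := by
      intro v _ w _ hvw
      rw [Finset.disjoint_left]
      intro P hP hP'
      obtain ⟨x, hx⟩ := partsOf_nonempty hP
      have h1 := owner_of_mem_partsOf hP hx
      have h2 := owner_of_mem_partsOf hP' hx
      rw [h1] at h2
      exact hvw (Option.some.inj h2)
    rw [parts, Finset.card_insert_of_notMem hnotmem, Finset.card_biUnion hdisj]
    have : ∀ v : Fin n, (partsOf n t k v).card = (n - 1) + 4 * (k - 1) :=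
      fun v => card_partsOf v
    rw [Finset.sum_congr rfl (fun v _ => this v), Finset.sum_const, Finset.card_univ,
      Fintype.card_fin, smul_eq_mul]
    zify [hn1, hk]
    ring


end
end
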